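/- For every integer n ≥ 1, Σ_{i=0}^{⌊(n−1)/3⌋} (1/(n−3i)) · C(n−i, 2i+1) · 2^i = (1/(n + 3/2)) · ( 2^n + [2 ∣ n]·(1/2)·(−1)^{n/2} + [2 ∣ (n−1)]·(1/2)·(−1)^{(n−1)/2} + [3 ∣ n]·(−3·2^{n/3 − 1}) ), where [P] equals 1 if P holds and 0 otherwise. -/

import Mathlib

private def Aseq (n : ℕ) : ℕ := ∑ i ∈ Finset.range (n+1), Nat.choose (n-i) (2*i+1) * 2^i
private def Dseq (n : ℕ) : ℕ := ∑ i ∈ Finset.range (n+1), Nat.choose (n-i) (2*i) * 2^i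

private lemma AD1 (n : ℕ) : Aseq (n+1) = Aseq n + Dseq n := by
  unfold Aseq Dseq
  rw [Finset.sum_range_succ]
  have h0 : (n+1 - (n+1)).choose (2*(n+1)+1) * 2^(n+1) = 0 := by
    simp [Nat.choose_eq_zero_of_lt]
  rw [h0, add_zero]
  have h1 : ∀ i ∈ Finset.range (n+1),
      Nat.choose (n+1-i) (2*i+1) * 2^i
        = Nat.choose (n-i) (2*i) * 2^i + Nat.choose (n-i) (2*i+1) * 2^i := by
    intro i hi
    rw [Finset.mem_range] at hi
    have : n+1-i = (n-i)+1 := by omega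
    rw [this, Nat.choose_succ_succ, add_mul]
  rw [Finset.sum_congr rfl h1, Finset.sum_add_distrib]
  omega

private lemma AD2 (n : ℕ) : Dseq (n+2) = Dseq (n+1) + 2 * Aseq n := by
  have hL : Dseq (n+2)
      = (∑ j ∈ Finset.range (n+1), Nat.choose (n-j) (2*j+2) * 2^(j+1))
        + (∑ j ∈ Finset.range (n+1), Nat.choose (n-j) (2*j+1) * 2^(j+1)) + 1 := by
    unfold Dseq
    rw [Finset.sum_range_succ']
    have h0 : Nat.choose (n+2-0) (2*0) * 2^0 = 1 := by simp
    rw [h0]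
    rw [Finset.sum_range_succ]
    have hlast : Nat.choose (n+2-(n+1+1)) (2*(n+1+1)) * 2^(n+1+1) = 0 := by
      simp [Nat.choose_eq_zero_of_lt]
    rw [hlast, add_zero]
    have h1 : ∀ j ∈ Finset.range (n+1),
        Nat.choose (n+2-(j+1)) (2*(j+1)) * 2^(j+1)
          = Nat.choose (n-j) (2*j+1) * 2^(j+1) + Nat.choose (n-j) (2*j+2) * 2^(j+1) := by
      intro j hj
      rw [Finset.mem_range] at hj
      have e1 : n+2-(j+1) = (n-j)+1 := by omega
      have e2 : 2*(j+1) = (2*j+1)+1 := by omega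
      rw [e1, e2, Nat.choose_succ_succ, add_mul]
    rw [Finset.sum_congr rfl h1, Finset.sum_add_distrib]
    ring
  have hD : Dseq (n+1) = (∑ j ∈ Finset.range (n+1), Nat.choose (n-j) (2*j+2) * 2^(j+1)) + 1 := by
    unfold Dseq
    rw [Finset.sum_range_succ']
    have h0 : Nat.choose (n+1-0) (2*0) * 2^0 = 1 := by simp
    rw [h0]
    congr 1
    refine Finset.sum_congr rfl fun j hj => ?_
    have e1 : n+1-(j+1) = n-j := by omega
    have e2 : 2*(j+1) = 2*j+2 := by omega
    rw [e1, e2]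
  have hA : ∑ j ∈ Finset.range (n+1), Nat.choose (n-j) (2*j+1) * 2^(j+1) = 2 * Aseq n := by
    unfold Aseq
    rw [Finset.mul_sum]
    refine Finset.sum_congr rfl fun j hj => ?_
    ring
  rw [hL, hD, hA]
  ring

private noncomputable def wseq (n : ℕ) : ℝ := if 2 ∣ n then (-2)*(-1)^(n/2) else (-1)^((n-1)/2)
private noncomputable def useq (n : ℕ) : ℝ := if 2 ∣ n then 3*(-1)^(n/2) else (-1)^((n-1)/2)

private lemma wu1 (n : ℕ) : wseq (n+1) + useq (n+1) = wseq (n+2) := by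
  unfold wseq useq
  rcases Nat.even_or_odd n with ⟨m, rfl⟩ | ⟨m, rfl⟩
  · rw [if_neg (by omega), if_neg (by omega), if_pos (by omega)]
    have e1 : (m+m+1-1)/2 = m := by omega
    have e2 : (m+m+2)/2 = m+1 := by omega
    rw [e1, e2, pow_succ]; ring
  · rw [if_pos (by omega), if_pos (by omega), if_neg (by omega)]
    have e1 : (2*m+1+1)/2 = m+1 := by omega
    have e2 : (2*m+1+2-1)/2 = m+1 := by omega
    rw [e1, e2]; ring

private lemma wu2 (n : ℕ) : useq (n+1) + 2 * wseq n = useq (n+2) := by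
  unfold wseq useq
  rcases Nat.even_or_odd n with ⟨m, rfl⟩ | ⟨m, rfl⟩
  · rw [if_neg (by omega), if_pos (by omega), if_pos (by omega)]
    have e1 : (m+m+1-1)/2 = m := by omega
    have e2 : (m+m)/2 = m := by omega
    have e3 : (m+m+2)/2 = m+1 := by omega
    rw [e1, e2, e3, pow_succ]; ring
  · rw [if_pos (by omega), if_neg (by omega), if_neg (by omega)]
    have e1 : (2*m+1+1)/2 = m+1 := by omega
    have e2 : (2*m+1-1)/2 = m := by omega
    have e3 : (2*m+1+2-1)/2 = m+1 := by omega
    rw [e1, e2, e3, pow_succ]; ring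

private lemma closedAD (n : ℕ) :
    5*((Aseq n : ℝ)) = 2^(n+1) + wseq n
    ∧ 5*((Aseq (n+1) : ℝ)) = 2^(n+2) + wseq (n+1)
    ∧ 5*((Dseq (n+1) : ℝ)) = 2^(n+2) + useq (n+1) := by
  induction n with
  | zero =>
    have hA0 : Aseq 0 = 0 := by decide
    have hA1 : Aseq 1 = 1 := by decide
    have hD1 : Dseq 1 = 1 := by decide
    rw [hA0, hA1, hD1]
    unfold wseq useq
    norm_num
  | succ n ih =>
    obtain ⟨h1, h2, h3⟩ := ih
    refine ⟨h2, ?_, ?_⟩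
    · rw [AD1 (n+1)]
      push_cast
      linear_combination h2 + h3 + wu1 n
    · rw [AD2 n]
      push_cast
      linear_combination h3 + 2*h1 + wu2 n

private lemma peri (j e : ℕ) :
    (6*(j:ℝ)+2*(e:ℝ)+11) * (Nat.choose (2*j+e+3) (2*j+3) : ℝ)
      = ((e:ℝ)+1) * (5 * (Nat.choose (2*j+e+3) (2*j+3) : ℝ)
          - 3 * (Nat.choose (2*j+e+2) (2*j+3) : ℝ)
          + 3 * (Nat.choose (2*j+e+2) (2*j+1) : ℝ)) := by
  have h1n : Nat.choose (2*j+e+2) (2*j+3) * (2*j+e+3) = Nat.choose (2*j+e+3) (2*j+3) * e := by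
    have h := Nat.choose_mul_succ_eq (2*j+e+2) (2*j+3)
    have e1 : 2*j+e+2+1 = 2*j+e+3 := by omega
    have e2 : 2*j+e+2+1 - (2*j+3) = e := by omega
    rw [e1, e2] at h
    exact h
  have h2n : Nat.choose (2*j+e+2) (2*j+2) * (2*j+2) = Nat.choose (2*j+e+2) (2*j+1) * (e+1) := by
    have h := Nat.choose_succ_right_eq (2*j+e+2) (2*j+1)
    have e1 : 2*j+1+1 = 2*j+2 := by omega
    have e2 : 2*j+e+2 - (2*j+1) = e+1 := by omega
    rw [e1, e2] at h
    exact h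
  have h4n : Nat.choose (2*j+e+3) (2*j+3) = Nat.choose (2*j+e+2) (2*j+2) + Nat.choose (2*j+e+2) (2*j+3) := by
    rw [show 2*j+e+3 = (2*j+e+2)+1 by omega, show 2*j+3 = (2*j+2)+1 by omega]
    exact Nat.choose_succ_succ _ _
  have h1 : (Nat.choose (2*j+e+2) (2*j+3) : ℝ) * (2*j+e+3) = (Nat.choose (2*j+e+3) (2*j+3) : ℝ) * e := by
    exact_mod_cast congrArg (Nat.cast : ℕ → ℝ) h1n
  have h2 : (Nat.choose (2*j+e+2) (2*j+2) : ℝ) * (2*j+2) = (Nat.choose (2*j+e+2) (2*j+1) : ℝ) * (e+1) := by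
    exact_mod_cast congrArg (Nat.cast : ℕ → ℝ) h2n
  have h4 : (Nat.choose (2*j+e+3) (2*j+3) : ℝ) = (Nat.choose (2*j+e+2) (2*j+2) : ℝ) + (Nat.choose (2*j+e+2) (2*j+3) : ℝ) := by
    exact_mod_cast congrArg (Nat.cast : ℕ → ℝ) h4n
  linear_combination 3*h1 + 3*h2 + (6*(j:ℝ)+6)*h4

private lemma R1 (m : ℕ) :
    ∑ i ∈ Finset.range ((m+1)/3 + 1), Nat.choose (m+2-i) (2*i+1) * 2^i = Aseq (m+2) := by
  unfold Aseq
  refine Finset.sum_subset (Finset.range_subset_range.mpr (by omega)) ?_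
  intro i hi hni
  rw [Finset.mem_range] at hi hni
  have : m+2-i < 2*i+1 := by omega
  simp [Nat.choose_eq_zero_of_lt this]

private lemma R2 (m : ℕ) :
    ∑ i ∈ Finset.range ((m+1)/3 + 1), Nat.choose (m+1-i) (2*i+1) * 2^i = Aseq (m+1) := by
  unfold Aseq
  refine Finset.sum_subset (Finset.range_subset_range.mpr (by omega)) ?_
  intro i hi hni
  rw [Finset.mem_range] at hi hni
  have : m+1-i < 2*i+1 := by omega
  simp [Nat.choose_eq_zero_of_lt this]

private lemma R3 (m : ℕ) :
    (∑ i ∈ Finset.range ((m+1)/3 + 1),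
        (if i = 0 then 0 else Nat.choose (m+1-i) (2*i-1) * 2^i))
      + (if 3 ∣ (m+2) then 2^((m+2)/3) else 0) = 2 * Aseq m := by
  have hre : (∑ i ∈ Finset.range ((m+1)/3 + 1),
      (if i = 0 then 0 else Nat.choose (m+1-i) (2*i-1) * 2^i))
      = 2 * ∑ j ∈ Finset.range ((m+1)/3), Nat.choose (m-j) (2*j+1) * 2^j := by
    rw [Finset.sum_range_succ']
    simp only [if_pos, add_zero]
    rw [Finset.mul_sum]
    apply Finset.sum_congr rfl
    intro j hj
    rw [if_neg (by omega)]
    have e1 : m+1-(j+1) = m-j := by omega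
    have e2 : 2*(j+1)-1 = 2*j+1 := by omega
    rw [e1, e2]
    ring
  rw [hre]
  by_cases h3 : 3 ∣ (m+2)
  · obtain ⟨q, hq⟩ := h3
    have hq1 : 1 ≤ q := by omega
    obtain ⟨p, rfl⟩ : ∃ p, q = p + 1 := ⟨q-1, by omega⟩
    have eK : (m+1)/3 = p := by omega
    have eQ : (m+2)/3 = p+1 := by omega
    rw [if_pos ⟨p+1, hq⟩, eK, eQ]
    have hAm : Aseq m = (∑ j ∈ Finset.range p, Nat.choose (m-j) (2*j+1) * 2^j) + 2^p := by
      unfold Aseq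
      have hsub : ∑ i ∈ Finset.range (p+1), Nat.choose (m-i) (2*i+1) * 2^i
          = ∑ i ∈ Finset.range (m+1), Nat.choose (m-i) (2*i+1) * 2^i := by
        refine Finset.sum_subset (Finset.range_subset_range.mpr (by omega)) ?_
        intro i hi hni
        rw [Finset.mem_range] at hi hni
        have : m-i < 2*i+1 := by omega
        simp [Nat.choose_eq_zero_of_lt this]
      rw [← hsub, Finset.sum_range_succ]
      congr 1
      have e1 : m - p = 2*p+1 := by omega
      rw [e1, Nat.choose_self, one_mul]
    rw [hAm]
    ring
  · rw [if_neg h3, add_zero]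
    have : ∑ j ∈ Finset.range ((m+1)/3), Nat.choose (m-j) (2*j+1) * 2^j = Aseq m := by
      unfold Aseq
      refine Finset.sum_subset (Finset.range_subset_range.mpr (by omega)) ?_
      intro i hi hni
      rw [Finset.mem_range] at hi hni
      have h3' : ¬ (m+2) % 3 = 0 := by
        intro h; exact h3 (Nat.dvd_of_mod_eq_zero h)
      have : m-i < 2*i+1 := by omega
      simp [Nat.choose_eq_zero_of_lt this]
    rw [this]

private lemma mainred (m : ℕ) :
    (2*(m:ℝ)+7) * (∑ i ∈ Finset.range ((m + 2 - 1) / 3 + 1),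
        (1 / (((m+2 : ℕ) : ℝ) - 3 * i)) * (Nat.choose (m + 2 - i) (2 * i + 1) : ℝ) * 2 ^ i)
      = 5*(Aseq (m+2) : ℝ) - 3*(Aseq (m+1) : ℝ) + 6*(Aseq m : ℝ)
        - 3*(if 3 ∣ (m+2) then (2:ℝ)^((m+2)/3) else 0) := by
  have hK : (m + 2 - 1) / 3 + 1 = (m+1)/3 + 1 := by omega
  rw [hK, Finset.mul_sum]
  have hterm : ∀ i ∈ Finset.range ((m+1)/3 + 1),
      (2*(m:ℝ)+7) * ((1 / (((m+2 : ℕ) : ℝ) - 3 * i)) * (Nat.choose (m + 2 - i) (2 * i + 1) : ℝ) * 2 ^ i)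
      = 5*((Nat.choose (m+2-i) (2*i+1) * 2^i : ℕ) : ℝ)
        - 3*((Nat.choose (m+1-i) (2*i+1) * 2^i : ℕ) : ℝ)
        + 3*(((if i = 0 then 0 else Nat.choose (m+1-i) (2*i-1) * 2^i) : ℕ) : ℝ) := by
    intro i hi
    rw [Finset.mem_range] at hi
    have h3i : 3*i ≤ m+1 := by omega
    rcases Nat.eq_zero_or_pos i with rfl | hipos
    · simp only [Nat.mul_zero, Nat.add_zero, zero_add, Nat.sub_zero, Nat.choose_one_right, if_pos,
        pow_zero, Nat.cast_zero, mul_zero, add_zero, mul_one, Nat.cast_ofNat]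
      have hne : ((m+2 : ℕ) : ℝ) ≠ 0 := by positivity
      field_simp
      push_cast; ring
    · obtain ⟨j, rfl⟩ : ∃ j, i = j + 1 := ⟨i-1, by omega⟩
      obtain ⟨e, rfl⟩ : ∃ e, m = 3*j + e + 2 := ⟨m - 3*j - 2, by omega⟩
      rw [if_neg (by omega)]
      rw [show 3*j+e+2+2-(j+1) = 2*j+e+3 by omega, show 2*(j+1)+1 = 2*j+3 by omega,
          show 3*j+e+2+1-(j+1) = 2*j+e+2 by omega, show 2*(j+1)-1 = 2*j+1 by omega]
      have hden : (((3*j+e+2)+2 : ℕ) : ℝ) - 3 * ((j+1 : ℕ) : ℝ) = (e:ℝ)+1 := by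
        push_cast; ring
      rw [hden]
      have hne : (e:ℝ)+1 ≠ 0 := by positivity
      push_cast
      field_simp
      linear_combination peri j e
  rw [Finset.sum_congr rfl hterm]
  rw [Finset.sum_add_distrib, Finset.sum_sub_distrib]
  rw [← Finset.mul_sum, ← Finset.mul_sum, ← Finset.mul_sum]
  rw [← Nat.cast_sum, ← Nat.cast_sum, ← Nat.cast_sum]
  rw [R1, R2]
  have h3 := R3 m
  have h3r : ((∑ i ∈ Finset.range ((m+1)/3 + 1),
      (if i = 0 then 0 else Nat.choose (m+1-i) (2*i-1) * 2^i) : ℕ) : ℝ)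
      = 2*(Aseq m : ℝ) - (if 3 ∣ (m+2) then (2:ℝ)^((m+2)/3) else 0) := by
    have := congrArg (Nat.cast : ℕ → ℝ) h3
    push_cast at this ⊢
    linarith [this]
  rw [h3r]
  ring

private lemma wcomb (m : ℕ) :
    5*wseq (m+2) - 3*wseq (m+1) + 6*wseq m
      = 10*((if 2 ∣ (m+2) then (1/2 : ℝ)*(-1)^((m+2)/2) else 0)
          + (if 2 ∣ (m+1) then (1/2 : ℝ)*(-1)^((m+1)/2) else 0)) := by
  unfold wseq
  rcases Nat.even_or_odd m with ⟨k, rfl⟩ | ⟨k, rfl⟩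
  · rw [if_pos (by omega), if_neg (by omega), if_pos (by omega),
        if_pos (by omega), if_neg (by omega)]
    have e1 : (k+k+2)/2 = k+1 := by omega
    have e2 : (k+k+1-1)/2 = k := by omega
    have e3 : (k+k)/2 = k := by omega
    rw [e1, e2, e3, pow_succ]
    ring
  · rw [if_neg (by omega), if_pos (by omega), if_neg (by omega),
        if_neg (by omega), if_pos (by omega)]
    have e1 : (2*k+1+2-1)/2 = k+1 := by omega
    have e2 : (2*k+1+1)/2 = k+1 := by omega
    have e3 : (2*k+1-1)/2 = k := by omega
    rw [e1, e2, e3, pow_succ]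
    ring

/-- Lemma 5.4, equation (5.4): for `n ≥ 1`,
`Σ_{i=0}^{⌊(n−1)/3⌋} C(n−i, 2i+1)·2^i/(n−3i)
  = (1/(n+3/2))(2^n + [2∣n](1/2)(−1)^{n/2} + [2∣(n−1)](1/2)(−1)^{(n−1)/2} + [3∣n](−3·2^{n/3−1}))`. -/
theorem binom_identity_odd (n : ℕ) (hn : 1 ≤ n) :
    ∑ i ∈ Finset.range ((n - 1) / 3 + 1),
        (1 / ((n : ℝ) - 3 * i)) * (Nat.choose (n - i) (2 * i + 1) : ℝ) * 2 ^ i =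
      (1 / ((n : ℝ) + 3 / 2)) *
        (2 ^ n + (if 2 ∣ n then (1 / 2 : ℝ) * (-1) ^ (n / 2) else 0)
          + (if 2 ∣ (n - 1) then (1 / 2 : ℝ) * (-1) ^ ((n - 1) / 2) else 0)
          + (if 3 ∣ n then (-3 : ℝ) * 2 ^ (n / 3 - 1) else 0)) := by
  rcases eq_or_lt_of_le hn with h1 | h2
  · -- n = 1
    subst h1
    norm_num [Finset.sum_range_one]
  · -- n ≥ 2
    obtain ⟨m, rfl⟩ : ∃ m, n = m + 2 := ⟨n - 2, by omega⟩
    have hm := mainred m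
    have hc1 := (closedAD m).1
    have hc2 := (closedAD m).2.1
    have hc3 := (closedAD (m+1)).2.1
    have hw := wcomb m
    have hif3 : 3*(if 3 ∣ (m+2) then (2:ℝ)^((m+2)/3) else 0)
        = -2 * (if 3 ∣ (m+2) then (-3:ℝ)*2^((m+2)/3 - 1) else 0) := by
      by_cases h : 3 ∣ (m+2)
      · obtain ⟨p, hp⟩ : ∃ p, (m+2)/3 = p + 1 := ⟨(m+2)/3 - 1, by omega⟩
        rw [if_pos h, if_pos h, hp, Nat.add_sub_cancel, pow_succ]
        ring
      · simp [h]
    have he1 : m + 2 - 1 = m + 1 := by omega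
    rw [he1] at hm ⊢
    simp only [show m+1+1 = m+2 from by omega, show m+1+2 = m+3 from by omega] at hc3
    have h27 : (2*(m:ℝ)+7) ≠ 0 := by positivity
    have hco : (2*(m:ℝ)+7) * (1/(((m+2 : ℕ) : ℝ)+3/2)) = 2 := by
      have hcast : ((m+2 : ℕ) : ℝ) = (m:ℝ)+2 := by push_cast; ring
      rw [hcast, mul_one_div, div_eq_iff (by positivity)]
      ring
    refine mul_left_cancel₀ h27 ?_
    rw [hm, ← mul_assoc, hco]
    linear_combination hc3 - (3/5)*hc2 + (6/5)*hc1 + (1/5)*hw - hif3
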